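/- Let c ≥ 0 and β ∈ (0,1] with c > 0 or β < 1, let μ ∈ (0,1) with βμ > c, and let G₀ = (1-μ)·δ₀ + μ·δ₁. Then z₀ := (βμ - c)/(1 - β(1-μ)) is the reservation value of G₀, i.e., z₀ = -c + β·∫ max(x,z₀) dG₀(x); and for every Borel probability measure F on [0,1] with mean μ and F ≠ G₀, any reservation value z_F of F satisfies z_F < z₀. In other words, the fully revealing (Bernoulli) signal induces a strictly higher reservation value than any other distribution in M(μ). -/

import Mathlib

open MeasureTheory

/-- With frictions, `z₀ = (βμ-c)/(1-β(1-μ))` is the reservation value of the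
Bernoulli measure `G₀`, and every other measure in `M(μ)` has a strictly lower reservation
value. -/
theorem stmt_3 (c β μ : ℝ) (hc : 0 ≤ c) (hβ : 0 < β) (hβ1 : β ≤ 1)
    (hfric : 0 < c ∨ β < 1) (hμ : 0 < μ) (hμ1 : μ < 1) (hval : c < β * μ) :
    (let G₀ : Measure ℝ :=
      ENNReal.ofReal (1 - μ) • Measure.dirac (0:ℝ) + ENNReal.ofReal μ • Measure.dirac (1:ℝ)
     let z₀ : ℝ := (β * μ - c) / (1 - β * (1 - μ))
     (z₀ = -c + β * ∫ x, max x z₀ ∂G₀) ∧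
       ∀ F : Measure ℝ, IsProbabilityMeasure F → F (Set.Icc (0:ℝ) 1)ᶜ = 0 →
         (∫ x, x ∂F) = μ → F ≠ G₀ →
           ∀ z : ℝ, (z = -c + β * ∫ x, max x z ∂F) → z < z₀) := by
  intro G₀ z₀
  have hden : 0 < 1 - β * (1 - μ) := by nlinarith
  have hz₀pos : 0 < z₀ := div_pos (by linarith) hden
  have hz₀lt1 : z₀ < 1 := by
    simp only [z₀]
    rw [div_lt_one hden]
    rcases hfric with h | h <;> nlinarith
  constructor
  · -- reservation value of G₀
    have hint : ∀ p : ℝ, Integrable (fun x => max x z₀) (Measure.dirac p) :=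
      fun p => (integrable_const (max p z₀)).congr (ae_eq_dirac (fun x => max x z₀)).symm
    have hI : ∫ x, max x z₀ ∂G₀ = (1 - μ) * max 0 z₀ + μ * max 1 z₀ := by
      simp only [G₀]
      rw [integral_add_measure ((hint 0).smul_measure ENNReal.ofReal_ne_top)
          ((hint 1).smul_measure ENNReal.ofReal_ne_top),
        integral_smul_measure, integral_smul_measure, integral_dirac, integral_dirac,
        ENNReal.toReal_ofReal (by linarith), ENNReal.toReal_ofReal hμ.le]
      simp [smul_eq_mul]
    rw [hI, max_eq_right hz₀pos.le, max_eq_left hz₀lt1.le]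
    simp only [z₀]
    field_simp
    ring
  · intro F hF hsupp hmean hne z hz
    have hae : ∀ᵐ x ∂F, x ∈ Set.Icc (0:ℝ) 1 := by
      rw [ae_iff]
      exact hsupp
    have hint_id : Integrable (fun x : ℝ => x) F := by
      refine (integrable_const (1:ℝ)).mono' measurable_id.aestronglyMeasurable ?_
      filter_upwards [hae] with x hx
      rw [Real.norm_eq_abs, abs_of_nonneg hx.1]; exact hx.2
    have hintmax : ∀ w : ℝ, Integrable (fun x => max x w) F := by
      intro w
      refine (integrable_const (max 1 |w|)).mono'
        ((measurable_id.max measurable_const).aestronglyMeasurable) ?_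
      filter_upwards [hae] with x hx
      rw [Real.norm_eq_abs, abs_of_nonneg (le_max_of_le_left hx.1)]
      exact max_le_max hx.2 (le_abs_self w)
    rcases le_or_gt z 0 with hzle | hzpos
    · linarith
    have hz1 : z < 1 := by
      by_contra h
      push_neg at h
      have hIz : ∫ x, max x z ∂F = z := by
        rw [integral_congr_ae (g := fun _ => z) ?_, integral_const]
        · simp [hF.measure_univ]
        · filter_upwards [hae] with x hx
          exact max_eq_right (le_trans hx.2 h)
      rw [hIz] at hz
      rcases hfric with h' | h' <;> nlinarith
    -- F gives positive mass to (0,1)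
    have hF01 : F (Set.Ioo (0:ℝ) 1) ≠ 0 := by
      intro h01
      apply hne
      have hc01 : F ({0, 1} : Set ℝ)ᶜ = 0 := by
        refine measure_mono_null ?_ (measure_union_null h01 hsupp)
        intro x hx
        simp only [Set.mem_compl_iff, Set.mem_insert_iff, Set.mem_singleton_iff] at hx
        push_neg at hx
        by_cases hxI : x ∈ Set.Icc (0:ℝ) 1
        · exact Or.inl ⟨lt_of_le_of_ne hxI.1 (Ne.symm hx.1), lt_of_le_of_ne hxI.2 hx.2⟩
        · exact Or.inr hxI
      have hmeas01 : MeasurableSet ({0,1} : Set ℝ) :=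
        (measurableSet_singleton 0).union (measurableSet_singleton 1)
      -- F {1} = ofReal μ
      have hmean1 : (F {(1:ℝ)}).toReal = μ := by
        have heq : (fun x : ℝ => x) =ᵐ[F] Set.indicator {(1:ℝ)} (fun _ => (1:ℝ)) := by
          have h2 : ∀ᵐ x ∂F, x ∈ ({0,1} : Set ℝ) := by
            rw [ae_iff]; exact hc01
          filter_upwards [h2] with x hx
          rcases hx with rfl | hx
          · simp
          · simp at hx; subst hx; simp
        rw [← hmean, integral_congr_ae heq, integral_indicator_const _ (measurableSet_singleton 1)]
        simp [Measure.real]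
      have hF1 : F {(1:ℝ)} = ENNReal.ofReal μ := by
        rw [← hmean1, ENNReal.ofReal_toReal (measure_ne_top F _)]
      have hF0 : F {(0:ℝ)} = ENNReal.ofReal (1 - μ) := by
        have htot : F {(0:ℝ)} + F {(1:ℝ)} = 1 := by
          rw [← measure_union (by simp) (measurableSet_singleton 1)]
          have : F ({0,1} : Set ℝ) = 1 := by
            have := measure_add_measure_compl (μ := F) hmeas01
            rw [hc01, add_zero] at this
            rw [this, hF.measure_univ]
          simpa [Set.union_singleton, Set.pair_comm] using this
        rw [hF1] at htot
        have h0v : F {(0:ℝ)} = 1 - ENNReal.ofReal μ :=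
          ENNReal.eq_sub_of_add_eq ENNReal.ofReal_ne_top htot
        rw [h0v, ENNReal.ofReal_sub _ hμ.le, ENNReal.ofReal_one]
      -- now extensionality
      classical
      ext s hs
      have hdiff : F (s \ {0,1}) = 0 :=
        measure_mono_null (fun x hx => hx.2) hc01
      have hsplit : F s = F (s ∩ {0,1}) := by
        rw [← measure_inter_add_diff s hmeas01, hdiff, add_zero]
      have hdisj : Disjoint (s ∩ {(0:ℝ)}) (s ∩ {(1:ℝ)}) := by
        simp only [Set.disjoint_left, Set.mem_inter_iff, Set.mem_singleton_iff]
        rintro x ⟨-, rfl⟩ ⟨-, h⟩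
        norm_num at h
      have hinter : F (s ∩ {0,1}) = F (s ∩ {0}) + F (s ∩ {1}) := by
        rw [show s ∩ ({0,1} : Set ℝ) = (s ∩ {0}) ∪ (s ∩ {1}) by
          rw [← Set.inter_union_distrib_left]; rfl]
        exact measure_union hdisj (hs.inter (measurableSet_singleton 1))
      have e0 : F (s ∩ {(0:ℝ)}) = if (0:ℝ) ∈ s then ENNReal.ofReal (1 - μ) else 0 := by
        by_cases h0 : (0:ℝ) ∈ s
        · rw [if_pos h0, Set.inter_eq_right.2 (Set.singleton_subset_iff.2 h0), hF0]
        · rw [if_neg h0, Set.inter_singleton_eq_empty.2 h0, measure_empty]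
      have e1 : F (s ∩ {(1:ℝ)}) = if (1:ℝ) ∈ s then ENNReal.ofReal μ else 0 := by
        by_cases h1 : (1:ℝ) ∈ s
        · rw [if_pos h1, Set.inter_eq_right.2 (Set.singleton_subset_iff.2 h1), hF1]
        · rw [if_neg h1, Set.inter_singleton_eq_empty.2 h1, measure_empty]
      simp only [G₀]
      rw [hsplit, hinter, e0, e1, Measure.add_apply, Measure.smul_apply, Measure.smul_apply,
        Measure.dirac_apply' _ hs, Measure.dirac_apply' _ hs]
      by_cases h0 : (0:ℝ) ∈ s <;> by_cases h1 : (1:ℝ) ∈ s <;>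
        simp [Set.indicator_apply, h0, h1, smul_eq_mul]
    -- main strict inequality
    have key : ∫ x, max x z ∂F < z + (1 - z) * μ := by
      have hglin : Integrable (fun x : ℝ => z + x * (1 - z)) F :=
        (integrable_const z).add (hint_id.mul_const _)
      have hg_int : Integrable (fun x : ℝ => z + x * (1 - z) - max x z) F :=
        hglin.sub (hintmax z)
      have hnonneg : 0 ≤ᵐ[F] fun x : ℝ => z + x * (1 - z) - max x z := by
        filter_upwards [hae] with x hx
        rcases le_total x z with h | h
        · simp only [Pi.zero_apply]
          rw [max_eq_right h]
          nlinarith [hx.1]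
        · simp only [Pi.zero_apply]
          rw [max_eq_left h]
          nlinarith [hx.2]
      have hpos : 0 < ∫ x, (z + x * (1 - z) - max x z) ∂F := by
        rw [integral_pos_iff_support_of_nonneg_ae hnonneg hg_int]
        refine lt_of_lt_of_le (b := F (Set.Ioo (0:ℝ) 1)) ?_ (measure_mono ?_)
        · exact pos_iff_ne_zero.2 hF01
        · intro x hx
          have hxpos : (0:ℝ) < x := hx.1
          have hxlt : x < 1 := hx.2
          have : 0 < z + x * (1 - z) - max x z := by
            rcases le_total x z with h | h
            · rw [max_eq_right h]; nlinarith
            · rw [max_eq_left h]; nlinarith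
          exact this.ne'
      have hlin : ∫ x, (z + x * (1 - z)) ∂F = z + (1 - z) * μ := by
        rw [integral_add (integrable_const z) (hint_id.mul_const _), integral_const,
          integral_mul_const, hmean]
        simp [hF.measure_univ]
        ring
      rw [integral_sub hglin (hintmax z), hlin] at hpos
      linarith
    simp only [z₀]
    rw [lt_div_iff₀ hden]
    nlinarith [mul_lt_mul_of_pos_left key hβ]
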